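/- arXiv:2602.18175 — 4 statements merged into one kernel-verified Lean document; each statement's English description precedes it below -/
import Mathlib

section
/- For p, q > 1 with 1/p + 1/q = 1, the convex (Legendre–Fenchel) conjugate of φ_p equals φ_q, i.e., for every y ∈ ℝ, sup_{x ∈ ℝ} (x·y − φ_p(x)) = φ_q(y). -/
noncomputable def phiN (p : ℝ) (x : ℝ) : ℝ :=
  if |x| ≤ 1 then x ^ 2 / 2 else |x| ^ p / p - 1 / p + 1 / 2

lemma phiN_abs (p x : ℝ) : phiN p |x| = phiN p x := by
  simp [phiN, abs_abs, sq_abs]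

-- Bernoulli consequence: for b ≥ 1, q ≥ 1, b - 1/2 ≤ b^q/q - 1/q + 1/2
lemma bern_aux {b q : ℝ} (hb : 1 ≤ b) (hq : 1 < q) :
    b - 1/2 ≤ b ^ q / q - 1/q + 1/2 := by
  have h := one_add_mul_self_le_rpow_one_add (s := b - 1) (by linarith) hq.le
  have hb' : (1 : ℝ) + (b - 1) = b := by ring
  rw [hb'] at h
  have hq0 : 0 < q := by linarith
  have h2 : (1 + q * (b - 1)) / q ≤ b ^ q / q := by gcongr
  have h3 : (1 + q * (b - 1)) / q = 1 / q + b - 1 := by field_simp; ring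
  linarith

lemma key_ineq {p q : ℝ} (hp : 1 < p) (hq : 1 < q) (hpq : 1 / p + 1 / q = 1)
    {a b : ℝ} (ha : 0 ≤ a) (hb : 0 ≤ b) : a * b ≤ phiN p a + phiN q b := by
  have hcj : Real.HolderConjugate p q := ⟨by rw [← one_div, ← one_div, inv_one]; exact hpq, by linarith, by linarith⟩
  have hpa : |a| = a := abs_of_nonneg ha
  have hpb : |b| = b := abs_of_nonneg hb
  unfold phiN
  rw [hpa, hpb]
  rcases le_or_gt a 1 with h1 | h1 <;> rcases le_or_gt b 1 with h2 | h2
  · simp only [if_pos h1, if_pos h2]; nlinarith [sq_nonneg (a - b)]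
  · simp only [if_pos h1, if_neg (not_le.2 h2)]
    have := bern_aux h2.le hq
    nlinarith [mul_nonneg (by linarith : (0:ℝ) ≤ 1 - a) (by linarith : (0:ℝ) ≤ 2*b - 1 - a)]
  · simp only [if_neg (not_le.2 h1), if_pos h2]
    have := bern_aux h1.le hp
    nlinarith [mul_nonneg (by linarith : (0:ℝ) ≤ 1 - b) (by linarith : (0:ℝ) ≤ 2*a - 1 - b)]
  · simp only [if_neg (not_le.2 h1), if_neg (not_le.2 h2)]
    have := Real.young_inequality_of_nonneg ha hb hcj
    have hp0 : p ≠ 0 := by positivity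
    have hq0 : q ≠ 0 := by positivity
    have : 1/p + 1/q = 1 := hpq
    nlinarith [Real.young_inequality_of_nonneg ha hb hcj]

theorem convex_conjugate_phiN (p q : ℝ) (hp : 1 < p) (hq : 1 < q)
    (hpq : 1 / p + 1 / q = 1) (y : ℝ) :
    (⨆ x : ℝ, ((x * y - phiN p x : ℝ) : EReal)) = ((phiN q y : ℝ) : EReal) := by
  have hub : ∀ x : ℝ, x * y - phiN p x ≤ phiN q y := by
    intro x
    have h1 : x * y ≤ |x| * |y| := by
      calc x * y ≤ |x * y| := le_abs_self _
        _ = |x| * |y| := abs_mul x y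
    have h2 := key_ineq hp hq hpq (abs_nonneg x) (abs_nonneg y)
    rw [phiN_abs, phiN_abs] at h2
    linarith
  -- witness
  obtain ⟨x₀, hx₀⟩ : ∃ x₀ : ℝ, x₀ * y - phiN p x₀ = phiN q y := by
    rcases le_or_gt |y| 1 with h | h
    · exact ⟨y, by simp [phiN, h, sq]; ring⟩
    · refine ⟨y * |y| ^ (q - 2), ?_⟩
      have hy0 : 0 < |y| := by linarith
      have habs : |y * |y| ^ (q - 2)| = |y| ^ (q - 1) := by
        rw [abs_mul, abs_of_nonneg (Real.rpow_nonneg (abs_nonneg y) _),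
          ← Real.rpow_one_add' (by positivity) (by intro hc; linarith)]
        ring_nf
      have hxy : (y * |y| ^ (q - 2)) * y = |y| ^ q := by
        have h2 : y * |y| ^ (q - 2) * y = |y| ^ (2:ℝ) * |y| ^ (q - 2) := by
          rw [Real.rpow_two, sq_abs]; ring
        rw [h2, ← Real.rpow_add hy0]; ring_nf
      have hgt : 1 < |y| ^ (q - 1) :=
        Real.one_lt_rpow_iff_of_pos hy0 |>.2 (Or.inl ⟨h, by linarith⟩)
      have hqp : (q - 1) * p = q := by
        have hp0 : p ≠ 0 := by positivity
        have hq0 : q ≠ 0 := by positivity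
        field_simp at hpq
        nlinarith [hpq]
      have hpow : (|y| ^ (q - 1)) ^ p = |y| ^ q := by
        rw [← Real.rpow_mul hy0.le, hqp]
      unfold phiN
      rw [habs, if_neg (not_le.2 hgt), if_neg (not_le.2 h), hxy, hpow]
      have hp0 : p ≠ 0 := by positivity
      have hq0 : q ≠ 0 := by positivity
      have hsum : q + p = p * q := by field_simp at hpq; linarith
      have hA : |y| ^ q / p + |y| ^ q / q = |y| ^ q := by
        field_simp
        linear_combination hsum
      have h12 : 1/p - 1/2 = 1/2 - 1/q := by linarith
      linarith
  apply le_antisymm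
  · exact iSup_le fun x => EReal.coe_le_coe_iff.2 (hub x)
  · rw [← hx₀]
    exact le_iSup (fun x : ℝ => ((x * y - phiN p x : ℝ) : EReal)) x₀
end

section
/- One-sided tail bound via convex conjugate: if ξ satisfies Ê[e^{λ(ξ − m̄)}] ≤ e^{φ(aλ)} for all λ > 0, where φ is a quadratic N-function and a > 0, then for every ε > 0, V̂(ξ − m̄ > ε) ≤ exp(−φ*(ε/a)), where φ* is the convex conjugate of φ. -/
theorem tail_bound_conjugate {Ω : Type*}
    (E : (Ω → ℝ) → ℝ)
    (hmono : ∀ X Y : Ω → ℝ, (∀ ω, X ω ≤ Y ω) → E X ≤ E Y)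
    (hconst : ∀ c : ℝ, E (fun _ => c) = c)
    (hsubadd : ∀ X Y : Ω → ℝ, E (fun ω => X ω + Y ω) ≤ E X + E Y)
    (hhomog : ∀ (l : ℝ), 0 ≤ l → ∀ X : Ω → ℝ, E (fun ω => l * X ω) = l * E X)
    (V : Set Ω → ℝ)
    (hV : ∀ A : Set Ω, V A = E (A.indicator fun _ => (1 : ℝ)))
    (φ φstar : ℝ → ℝ)
    (heven : ∀ x, φ (-x) = φ x) (hconvex : ConvexOn ℝ Set.univ φ)
    (hφstar : ∀ y : ℝ, IsLUB {z : ℝ | ∃ x : ℝ, z = x * y - φ x} (φstar y))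
    (ξ : Ω → ℝ) (mbar a : ℝ) (ha : 0 < a)
    (hmgf : ∀ lam : ℝ, 0 < lam →
      E (fun ω => Real.exp (lam * (ξ ω - mbar))) ≤ Real.exp (φ (a * lam)))
    (eps : ℝ) (heps : 0 < eps) :
    V {ω | ξ ω - mbar > eps} ≤ Real.exp (-(φstar (eps / a))) := by
  set y : ℝ := eps / a with hy
  have hy0 : 0 < y := div_pos heps ha
  set A : Set Ω := {ω | ξ ω - mbar > eps} with hA
  -- Key Chernoff bound for x > 0
  have key : ∀ x : ℝ, 0 < x → V A ≤ Real.exp (-(x * y - φ x)) := by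
    intro x hx
    set lam : ℝ := x / a with hlam
    have hlam0 : 0 < lam := div_pos hx ha
    have hal : a * lam = x := by rw [hlam]; field_simp [ha.ne']
    have hle : ∀ ω, A.indicator (fun _ => (1 : ℝ)) ω ≤
        Real.exp (-(lam * eps)) * Real.exp (lam * (ξ ω - mbar)) := by
      intro ω
      rw [← Real.exp_add]
      by_cases hω : ω ∈ A
      · rw [Set.indicator_of_mem hω]
        have : (0 : ℝ) ≤ -(lam * eps) + lam * (ξ ω - mbar) := by
          have : eps ≤ ξ ω - mbar := le_of_lt hω
          nlinarith [mul_le_mul_of_nonneg_left this (le_of_lt hlam0)]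
        calc (1 : ℝ) = Real.exp 0 := (Real.exp_zero).symm
          _ ≤ _ := Real.exp_le_exp.mpr this
      · rw [Set.indicator_of_notMem hω]
        positivity
    have h1 : V A ≤ E (fun ω => Real.exp (-(lam * eps)) * Real.exp (lam * (ξ ω - mbar))) := by
      rw [hV A]; exact hmono _ _ hle
    rw [hhomog _ (Real.exp_nonneg _) _] at h1
    have h2 : Real.exp (-(lam * eps)) * E (fun ω => Real.exp (lam * (ξ ω - mbar))) ≤
        Real.exp (-(lam * eps)) * Real.exp (φ (a * lam)) :=
      mul_le_mul_of_nonneg_left (hmgf lam hlam0) (Real.exp_nonneg _)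
    have h3 : Real.exp (-(lam * eps)) * Real.exp (φ (a * lam)) = Real.exp (-(x * y - φ x)) := by
      rw [← Real.exp_add, hal]
      congr 1
      have : lam * eps = x * y := by
        rw [hlam, hy]; ring
      rw [this]; ring
    calc V A ≤ _ := h1
      _ ≤ _ := h2
      _ = _ := h3
  -- Bound at x = 0 via a limit argument
  have key0 : V A ≤ Real.exp (φ 0) := by
    have htend : Filter.Tendsto (fun x : ℝ => Real.exp ((1 - x) * φ 0 + x * φ 1 - x * y))
        (nhdsWithin 0 (Set.Ioi 0)) (nhds (Real.exp (φ 0))) := by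
      have hc : Continuous (fun x : ℝ => Real.exp ((1 - x) * φ 0 + x * φ 1 - x * y)) := by
        continuity
      have := hc.tendsto 0
      simp only [sub_zero, zero_mul, one_mul, mul_zero, add_zero] at this
      exact this.mono_left nhdsWithin_le_nhds
    refine ge_of_tendsto htend ?_
    have hev : ∀ᶠ x : ℝ in nhdsWithin 0 (Set.Ioi 0), x ∈ Set.Ioo (0 : ℝ) 1 := by
      have h1 : ∀ᶠ x : ℝ in nhdsWithin 0 (Set.Ioi 0), x ∈ Set.Ioi (0 : ℝ) :=
        eventually_mem_nhdsWithin
      have h2 : ∀ᶠ x : ℝ in nhdsWithin 0 (Set.Ioi 0), x < 1 := by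
        apply Filter.Eventually.filter_mono nhdsWithin_le_nhds
        exact Filter.Tendsto.eventually_lt_const (by norm_num) Filter.tendsto_id
      filter_upwards [h1, h2] with x hx1 hx2 using ⟨hx1, hx2⟩
    filter_upwards [hev] with x hx
    have hφx : φ x ≤ (1 - x) * φ 0 + x * φ 1 := by
      have := hconvex.2 (Set.mem_univ (0 : ℝ)) (Set.mem_univ (1 : ℝ))
        (by linarith [hx.2] : (0:ℝ) ≤ 1 - x) (le_of_lt hx.1) (by ring)
      simpa using this
    calc V A ≤ Real.exp (-(x * y - φ x)) := key x hx.1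
      _ ≤ _ := Real.exp_le_exp.mpr (by linarith)
  -- Combine via the LUB characterization
  rcases le_or_gt (V A) 0 with hV0 | hV0
  · exact le_trans hV0 (le_of_lt (Real.exp_pos _))
  · have hub : φstar y ≤ -Real.log (V A) := by
      refine (hφstar y).2 ?_
      rintro z ⟨x, rfl⟩
      have hgen : ∀ x : ℝ, 0 < x → x * y - φ x ≤ -Real.log (V A) := by
        intro x hx
        have := key x hx
        have hlog := Real.log_le_log hV0 this
        rw [Real.log_exp] at hlog
        linarith
      rcases lt_trichotomy x 0 with hx | hx | hx
      · have h1 : x * y - φ x ≤ (-x) * y - φ (-x) := by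
          rw [heven]
          nlinarith
        exact le_trans h1 (hgen (-x) (by linarith))
      · subst hx
        have hlog := Real.log_le_log hV0 key0
        rw [Real.log_exp] at hlog
        simp only [zero_mul, zero_sub]
        linarith
      · exact hgen x hx
    calc V A = Real.exp (Real.log (V A)) := (Real.exp_log hV0).symm
      _ ≤ Real.exp (-(φstar y)) := Real.exp_le_exp.mpr (by linarith)
end

section
/- Zajkowski-type convergence theorem for sub-linear expectations: let p > 1 and let (Z_n) be a sequence of random variables such that for each n there exists a_n ≤ c n^{−α} (with fixed c, α > 0) with Ê[e^{λ(Z_n − m̄)}] ≤ e^{φ_p(a_n λ)} for all λ > 0 and Ê[e^{λ(Z_n − m̲)}] ≤ e^{φ_p(a_n λ)} for all λ < 0. Then V̂({liminf_n Z_n < m̲} ∪ {limsup_n Z_n > m̄}) = 0. -/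
open Filter

lemma exp_ge_div_pow {y : ℝ} (hy : 0 ≤ y) (k : ℕ) : (y / k) ^ k ≤ Real.exp y := by
  rcases Nat.eq_zero_or_pos k with hk | hk
  · simp only [hk, pow_zero]
    exact Real.one_le_exp hy
  have hk0 : (0:ℝ) < k := by exact_mod_cast hk
  have h1 : (0:ℝ) ≤ y / k := div_nonneg hy hk0.le
  calc (y / k) ^ k ≤ (y / k + 1) ^ k := pow_le_pow_left₀ h1 (by linarith) k
    _ ≤ (Real.exp (y / k)) ^ k := pow_le_pow_left₀ (by linarith) (Real.add_one_le_exp _) k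
    _ = Real.exp y := by
        rw [← Real.exp_nat_mul, mul_div_cancel₀ _ (ne_of_gt hk0)]

lemma summable_exp_aux {ε c γ : ℝ} (hε : 0 < ε) (hc : 0 < c) (hγ : 0 < γ) :
    Summable (fun n : ℕ => Real.exp (1 / 2 - ε * (((n : ℝ) + 1) ^ γ / c))) := by
  set d : ℝ := ε / c with hd_def
  have hd : 0 < d := div_pos hε hc
  set k : ℕ := ⌈2 / γ⌉₊ + 1 with hk_def
  have hk2 : 2 ≤ γ * k := by
    have h1 : (2 / γ : ℝ) ≤ k := le_trans (Nat.le_ceil _) (by exact_mod_cast Nat.le_succ _)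
    calc (2:ℝ) = γ * (2 / γ) := by field_simp
      _ ≤ γ * k := by nlinarith
  have hsum : Summable (fun n : ℕ => Real.exp (1/2) * (k / d) ^ k * ((n : ℝ) + 1) ^ (-(γ * k))) := by
    apply Summable.mul_left
    have hbase : Summable (fun n : ℕ => ((n : ℝ)) ^ (-(γ * k))) :=
      Real.summable_nat_rpow.mpr (by linarith)
    have := (summable_nat_add_iff 1).mpr hbase
    refine this.congr fun n => ?_
    push_cast
    rfl
  refine Summable.of_nonneg_of_le (fun n => (Real.exp_pos _).le) (fun n => ?_) hsum
  set m : ℝ := (n : ℝ) + 1 with hm_def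
  have hm1 : (1:ℝ) ≤ m := by simp [hm_def]
  have hm0 : (0:ℝ) < m := by linarith
  have hx0 : 0 < d * m ^ γ := mul_pos hd (Real.rpow_pos_of_pos hm0 _)
  have hk0 : (0:ℝ) < k := by positivity
  have hexp : (d * m ^ γ / k) ^ k ≤ Real.exp (d * m ^ γ) := exp_ge_div_pow hx0.le k
  have hpow_pos : (0:ℝ) < (d * m ^ γ / k) ^ k := pow_pos (div_pos hx0 hk0) k
  have step1 : Real.exp (1/2 - ε * (m ^ γ / c)) = Real.exp (1/2) / Real.exp (d * m ^ γ) := by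
    rw [← Real.exp_sub]
    congr 1
    rw [hd_def]; ring
  rw [step1]
  have step2 : Real.exp (1/2) / Real.exp (d * m ^ γ) ≤ Real.exp (1/2) / (d * m ^ γ / k) ^ k :=
    div_le_div_of_nonneg_left (Real.exp_pos _).le hpow_pos hexp
  refine step2.trans ?_
  have hmk : (m ^ γ) ^ (k:ℕ) = m ^ (γ * k) := by
    rw [← Real.rpow_natCast (m ^ γ) k, ← Real.rpow_mul hm0.le]
  have hrw : (d * m ^ γ / k) ^ k = (d / k) ^ k * m ^ (γ * k) := by
    rw [← hmk, ← mul_pow]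
    congr 1
    ring
  rw [hrw]
  refine le_of_eq ?_
  calc Real.exp (1/2) / ((d / k) ^ k * m ^ (γ * (k:ℕ)))
      = Real.exp (1/2) * ((d / k) ^ k)⁻¹ * (m ^ (γ * (k:ℕ)))⁻¹ := by
        rw [div_eq_mul_inv, mul_inv, ← mul_assoc]
    _ = Real.exp (1/2) * ((k:ℝ) / d) ^ k * m ^ (-(γ * (k:ℕ))) := by
        rw [Real.rpow_neg hm0.le, ← inv_pow, inv_div]

theorem zajkowski_sublinear {Ω : Type*} [MeasurableSpace Ω]
    (E : (Ω → ℝ) → ℝ)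
    (hmono : ∀ X Y : Ω → ℝ, (∀ ω, X ω ≤ Y ω) → E X ≤ E Y)
    (hconst : ∀ c : ℝ, E (fun _ => c) = c)
    (hsubadd : ∀ X Y : Ω → ℝ, E (fun ω => X ω + Y ω) ≤ E X + E Y)
    (hhomog : ∀ (l : ℝ), 0 ≤ l → ∀ X : Ω → ℝ, E (fun ω => l * X ω) = l * E X)
    (V : Set Ω → ℝ)
    (hV : ∀ A : Set Ω, V A = E (A.indicator fun _ => (1 : ℝ)))
    (hVempty : V ∅ = 0) (hVuniv : V Set.univ = 1)
    (hVmono : ∀ A B : Set Ω, A ⊆ B → V A ≤ V B)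
    (hVsigma : ∀ A : ℕ → Set Ω,
      ENNReal.ofReal (V (⋃ n, A n)) ≤ ∑' n, ENNReal.ofReal (V (A n)))
    (hVcont : ∀ A : ℕ → Set Ω, Monotone A →
      Tendsto (fun n => V (A n)) atTop (nhds (V (⋃ n, A n))))
    (p : ℝ) (hp : 1 < p) (c α : ℝ) (hc : 0 < c) (hα : 0 < α)
    (Z : ℕ → Ω → ℝ) (mbar munder : ℝ) (a : ℕ → ℝ)
    (ha0 : ∀ n, 0 ≤ a n)
    (ha : ∀ n : ℕ, a n ≤ c * ((n : ℝ) + 1) ^ (-α))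
    (hup : ∀ n : ℕ, ∀ lam : ℝ, 0 < lam →
      E (fun ω => Real.exp (lam * (Z n ω - mbar))) ≤ Real.exp (phiN p (a n * lam)))
    (hlow : ∀ n : ℕ, ∀ lam : ℝ, lam < 0 →
      E (fun ω => Real.exp (lam * (Z n ω - munder))) ≤ Real.exp (phiN p (a n * lam))) :
    V ({ω | liminf (fun n => Z n ω) atTop < munder} ∪
       {ω | limsup (fun n => Z n ω) atTop > mbar}) = 0 := by
  -- nonnegativity of V
  have hVnn : ∀ A : Set Ω, 0 ≤ V A := by
    intro A
    rw [hV]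
    calc (0:ℝ) = E (fun _ => 0) := (hconst 0).symm
      _ ≤ E (A.indicator fun _ => (1:ℝ)) :=
        hmono _ _ (fun ω => Set.indicator_nonneg (fun _ _ => zero_le_one) ω)
  -- phiN bound
  have hphi : ∀ x : ℝ, |x| ≤ 1 → phiN p x ≤ 1 / 2 := by
    intro x hx
    rw [phiN, if_pos hx]
    have h2 : x ^ 2 ≤ 1 := by
      have := sq_abs x
      nlinarith [abs_nonneg x]
    linarith
  -- Chernoff bounds
  have chern : ∀ (ε : ℝ), 0 < ε → ∀ n : ℕ,
      V {ω | mbar + ε ≤ Z n ω} ≤ Real.exp (1 / 2 - ε * (((n : ℝ) + 1) ^ (α / 2) / c)) ∧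
      V {ω | Z n ω ≤ munder - ε} ≤ Real.exp (1 / 2 - ε * (((n : ℝ) + 1) ^ (α / 2) / c)) := by
    intro ε hε n
    set m : ℝ := (n : ℝ) + 1 with hm_def
    have hm0 : (0:ℝ) < m := by positivity
    have hm1 : (1:ℝ) ≤ m := by simp [hm_def]
    set lam : ℝ := m ^ (α / 2) / c with hlam_def
    have hlam : 0 < lam := div_pos (Real.rpow_pos_of_pos hm0 _) hc
    have hcap : a n * lam ≤ 1 := by
      calc a n * lam ≤ (c * m ^ (-α)) * lam := mul_le_mul_of_nonneg_right (ha n) hlam.le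
        _ = m ^ (-α) * m ^ (α / 2) := by
            rw [hlam_def]; field_simp
        _ = m ^ (-α + α / 2) := (Real.rpow_add hm0 _ _).symm
        _ ≤ 1 := Real.rpow_le_one_of_one_le_of_nonpos hm1 (by linarith)
    have hcap0 : 0 ≤ a n * lam := mul_nonneg (ha0 n) hlam.le
    have habs1 : |a n * lam| ≤ 1 := by rwa [abs_of_nonneg hcap0]
    have habs2 : |a n * (-lam)| ≤ 1 := by rwa [mul_neg, abs_neg]
    have hεlam : ε * (m ^ (α / 2) / c) = ε * lam := by rw [hlam_def]
    rw [hεlam]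
    constructor
    · -- upper event
      rw [hV]
      have hpt : ∀ ω, Set.indicator {ω | mbar + ε ≤ Z n ω} (fun _ => (1:ℝ)) ω ≤
          Real.exp (-(ε * lam)) * Real.exp (lam * (Z n ω - mbar)) := by
        intro ω
        rw [← Real.exp_add]
        by_cases hω : ω ∈ {ω | mbar + ε ≤ Z n ω}
        · rw [Set.indicator_of_mem hω]
          apply Real.one_le_exp
          have h1 : mbar + ε ≤ Z n ω := hω
          nlinarith
        · rw [Set.indicator_of_notMem hω]
          positivity
      calc E (Set.indicator {ω | mbar + ε ≤ Z n ω} fun _ => (1:ℝ))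
          ≤ E (fun ω => Real.exp (-(ε * lam)) * Real.exp (lam * (Z n ω - mbar))) :=
            hmono _ _ hpt
        _ = Real.exp (-(ε * lam)) * E (fun ω => Real.exp (lam * (Z n ω - mbar))) :=
            hhomog _ (Real.exp_nonneg _) _
        _ ≤ Real.exp (-(ε * lam)) * Real.exp (phiN p (a n * lam)) :=
            mul_le_mul_of_nonneg_left (hup n lam hlam) (Real.exp_nonneg _)
        _ ≤ Real.exp (-(ε * lam)) * Real.exp (1 / 2) :=
            mul_le_mul_of_nonneg_left (Real.exp_le_exp.mpr (hphi _ habs1)) (Real.exp_nonneg _)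
        _ = Real.exp (1 / 2 - ε * lam) := by rw [← Real.exp_add]; ring_nf
    · -- lower event
      rw [hV]
      have hpt : ∀ ω, Set.indicator {ω | Z n ω ≤ munder - ε} (fun _ => (1:ℝ)) ω ≤
          Real.exp (-(ε * lam)) * Real.exp ((-lam) * (Z n ω - munder)) := by
        intro ω
        rw [← Real.exp_add]
        by_cases hω : ω ∈ {ω | Z n ω ≤ munder - ε}
        · rw [Set.indicator_of_mem hω]
          apply Real.one_le_exp
          have h1 : Z n ω ≤ munder - ε := hω
          nlinarith
        · rw [Set.indicator_of_notMem hω]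
          positivity
      calc E (Set.indicator {ω | Z n ω ≤ munder - ε} fun _ => (1:ℝ))
          ≤ E (fun ω => Real.exp (-(ε * lam)) * Real.exp ((-lam) * (Z n ω - munder))) :=
            hmono _ _ hpt
        _ = Real.exp (-(ε * lam)) * E (fun ω => Real.exp ((-lam) * (Z n ω - munder))) :=
            hhomog _ (Real.exp_nonneg _) _
        _ ≤ Real.exp (-(ε * lam)) * Real.exp (phiN p (a n * (-lam))) :=
            mul_le_mul_of_nonneg_left (hlow n (-lam) (by linarith)) (Real.exp_nonneg _)
        _ ≤ Real.exp (-(ε * lam)) * Real.exp (1 / 2) :=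
            mul_le_mul_of_nonneg_left (Real.exp_le_exp.mpr (hphi _ habs2)) (Real.exp_nonneg _)
        _ = Real.exp (1 / 2 - ε * lam) := by rw [← Real.exp_add]; ring_nf
  -- Borel--Cantelli
  have BC : ∀ (A : ℕ → Set Ω) (g : ℕ → ℝ), Summable g → (∀ n, V (A n) ≤ g n) →
      V {ω | ∃ᶠ n in atTop, ω ∈ A n} = 0 := by
    intro A g hg hle
    set F : Set Ω := {ω | ∃ᶠ n in atTop, ω ∈ A n} with hF_def
    have hg0 : ∀ n, 0 ≤ g n := fun n => (hVnn _).trans (hle n)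
    have hfin : ∑' n, ENNReal.ofReal (g n) ≠ ⊤ := by
      rw [← ENNReal.ofReal_tsum_of_nonneg hg0 hg]
      exact ENNReal.ofReal_ne_top
    have htail : Tendsto (fun N => ∑' n, ENNReal.ofReal (g (n + N))) atTop (nhds 0) :=
      ENNReal.tendsto_sum_nat_add _ hfin
    have hbound : ∀ N, ENNReal.ofReal (V F) ≤ ∑' n, ENNReal.ofReal (g (n + N)) := by
      intro N
      have hsub : F ⊆ ⋃ n, A (n + N) := by
        intro ω hω
        obtain ⟨n, hn, hmem⟩ := (frequently_atTop.mp hω) N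
        exact Set.mem_iUnion.2 ⟨n - N, by rwa [Nat.sub_add_cancel hn]⟩
      calc ENNReal.ofReal (V F) ≤ ENNReal.ofReal (V (⋃ n, A (n + N))) :=
            ENNReal.ofReal_le_ofReal (hVmono _ _ hsub)
        _ ≤ ∑' n, ENNReal.ofReal (V (A (n + N))) := hVsigma _
        _ ≤ ∑' n, ENNReal.ofReal (g (n + N)) :=
            ENNReal.tsum_le_tsum (fun n => ENNReal.ofReal_le_ofReal (hle _))
    have h0 : ENNReal.ofReal (V F) ≤ 0 := ge_of_tendsto' htail hbound
    have := ENNReal.ofReal_eq_zero.mp (le_antisymm h0 zero_le)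
    exact le_antisymm this (hVnn _)
  -- the bad sets
  set Bset : ℕ → Set Ω := fun j => {ω | ∃ᶠ n in atTop, mbar + 1 / ((j:ℝ) + 1) ≤ Z n ω}
    with hBset_def
  set Cset : ℕ → Set Ω := fun j => {ω | ∃ᶠ n in atTop, Z n ω ≤ munder - 1 / ((j:ℝ) + 1)}
    with hCset_def
  have hej : ∀ j : ℕ, (0:ℝ) < 1 / ((j:ℝ) + 1) := fun j => by positivity
  have hVB : ∀ j : ℕ, V (Bset j) = 0 := by
    intro j
    exact BC (fun n => {ω | mbar + 1 / ((j:ℝ) + 1) ≤ Z n ω}) _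
      (summable_exp_aux (hej j) hc (by linarith))
      (fun n => (chern _ (hej j) n).1)
  have hVC : ∀ j : ℕ, V (Cset j) = 0 := by
    intro j
    exact BC (fun n => {ω | Z n ω ≤ munder - 1 / ((j:ℝ) + 1)}) _
      (summable_exp_aux (hej j) hc (by linarith))
      (fun n => (chern _ (hej j) n).2)
  set D : ℕ → Set Ω := fun j => if Even j then Bset (j / 2) else Cset (j / 2) with hD_def
  have hVD : ∀ j, V (D j) = 0 := by
    intro j
    by_cases h : Even j
    · simp only [hD_def, if_pos h]; exact hVB _
    · simp only [hD_def, if_neg h]; exact hVC _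
  -- covering
  have cover : ({ω | liminf (fun n => Z n ω) atTop < munder} ∪
      {ω | limsup (fun n => Z n ω) atTop > mbar}) ⊆ ⋃ j, D j := by
    intro ω hω
    by_contra hn
    simp only [Set.mem_iUnion, not_exists] at hn
    have hB : ∀ j : ℕ, ω ∉ Bset j := by
      intro j
      have := hn (2 * j)
      simpa [hD_def, even_two_mul j, Nat.mul_div_cancel_left j (by norm_num : 0 < 2)] using this
    have hC : ∀ j : ℕ, ω ∉ Cset j := by
      intro j
      have := hn (2 * j + 1)
      have hodd : ¬ Even (2 * j + 1) := by simp [Nat.even_add_one, even_two_mul]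
      simpa [hD_def, hodd, Nat.mul_add_div, (by norm_num : (2:ℕ) ≠ 0)] using this
    have hB' : ∀ j : ℕ, ∀ᶠ n in atTop, Z n ω < mbar + 1 / ((j:ℝ) + 1) := by
      intro j
      have := hB j
      rw [hBset_def] at this
      simpa [not_frequently, not_le] using this
    have hC' : ∀ j : ℕ, ∀ᶠ n in atTop, munder - 1 / ((j:ℝ) + 1) < Z n ω := by
      intro j
      have := hC j
      rw [hCset_def] at this
      simpa [not_frequently, not_le] using this
    have cobdd_le : IsCoboundedUnder (· ≤ ·) atTop (fun n => Z n ω) :=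
      isCoboundedUnder_le_of_eventually_le atTop ((hC' 0).mono fun n h => h.le)
    have cobdd_ge : IsCoboundedUnder (· ≥ ·) atTop (fun n => Z n ω) :=
      isCoboundedUnder_ge_of_eventually_le atTop ((hB' 0).mono fun n h => h.le)
    have hup' : limsup (fun n => Z n ω) atTop ≤ mbar := by
      by_contra hlt
      push_neg at hlt
      obtain ⟨j, hj⟩ := exists_nat_one_div_lt (sub_pos.2 hlt)
      have hle2 : limsup (fun n => Z n ω) atTop ≤ mbar + 1 / ((j:ℝ) + 1) :=
        limsup_le_of_le cobdd_le ((hB' j).mono fun n h => h.le)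
      linarith
    have hlow' : munder ≤ liminf (fun n => Z n ω) atTop := by
      by_contra hlt
      push_neg at hlt
      obtain ⟨j, hj⟩ := exists_nat_one_div_lt (sub_pos.2 hlt)
      have hle2 : munder - 1 / ((j:ℝ) + 1) ≤ liminf (fun n => Z n ω) atTop :=
        le_liminf_of_le cobdd_ge ((hC' j).mono fun n h => h.le)
      linarith
    rcases hω with hω | hω
    · exact absurd hω (not_lt.2 hlow')
    · exact absurd hω (not_lt.2 hup')
  -- conclude
  have hfinal : ENNReal.ofReal (V ({ω | liminf (fun n => Z n ω) atTop < munder} ∪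
      {ω | limsup (fun n => Z n ω) atTop > mbar})) ≤ 0 := by
    calc ENNReal.ofReal (V _) ≤ ENNReal.ofReal (V (⋃ j, D j)) :=
          ENNReal.ofReal_le_ofReal (hVmono _ _ cover)
      _ ≤ ∑' j, ENNReal.ofReal (V (D j)) := hVsigma _
      _ = 0 := by simp [hVD]
  have := ENNReal.ofReal_eq_zero.mp (le_antisymm hfinal zero_le)
  exact le_antisymm this (hVnn _)
end

section
/- Strong law of large numbers for sub-Gaussian sequences under sub-linear expectation: let ξ_1, ξ_2, … satisfy Ê[∏_{i=1}^k e^{λ(ξ_i − m)}] ≤ ∏_{i=1}^k Ê[e^{λ(ξ_i − m)}] for all real λ, m, k, and suppose there exist σ > 0, m̄, m̲ with Ê[e^{λ(ξ_i − m̄)}] ≤ e^{σ²λ²/2} for all λ > 0 and Ê[e^{λ(ξ_i − m̲)}] ≤ e^{σ²λ²/2} for all λ < 0. Then with S_n = ξ_1 + ⋯ + ξ_n, V̂({liminf S_n/n < m̲} ∪ {limsup S_n/n > m̄}) = 0. -/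
open Filter

theorem slln_subgaussian_sublinear {Ω : Type*} [MeasurableSpace Ω]
    (E : (Ω → ℝ) → ℝ)
    (hmono : ∀ X Y : Ω → ℝ, (∀ ω, X ω ≤ Y ω) → E X ≤ E Y)
    (hconst : ∀ c : ℝ, E (fun _ => c) = c)
    (hsubadd : ∀ X Y : Ω → ℝ, E (fun ω => X ω + Y ω) ≤ E X + E Y)
    (hhomog : ∀ (l : ℝ), 0 ≤ l → ∀ X : Ω → ℝ, E (fun ω => l * X ω) = l * E X)
    (hmonoconv : ∀ X : ℕ → Ω → ℝ, (∀ ω, 0 ≤ X 0 ω) →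
      (∀ ω, Monotone fun n => X n ω) → ∀ Xlim : Ω → ℝ,
      (∀ ω, Tendsto (fun n => X n ω) atTop (nhds (Xlim ω))) →
      Tendsto (fun n => E (X n)) atTop (nhds (E Xlim)))
    (V : Set Ω → ℝ)
    (hV : ∀ A : Set Ω, V A = E (A.indicator fun _ => (1 : ℝ)))
    (hVsigma : ∀ A : ℕ → Set Ω,
      ENNReal.ofReal (V (⋃ n, A n)) ≤ ∑' n, ENNReal.ofReal (V (A n)))
    (hVcont : ∀ A : ℕ → Set Ω, Monotone A →
      Tendsto (fun n => V (A n)) atTop (nhds (V (⋃ n, A n))))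
    (ξ : ℕ → Ω → ℝ)
    (hfact : ∀ (lam m : ℝ) (k : ℕ),
      E (fun ω => ∏ i ∈ Finset.range k, Real.exp (lam * (ξ i ω - m))) ≤
        ∏ i ∈ Finset.range k, E (fun ω => Real.exp (lam * (ξ i ω - m))))
    (σ mbar munder : ℝ) (hσ : 0 < σ)
    (hup : ∀ i : ℕ, ∀ lam : ℝ, 0 < lam →
      E (fun ω => Real.exp (lam * (ξ i ω - mbar))) ≤ Real.exp (σ ^ 2 * lam ^ 2 / 2))
    (hlow : ∀ i : ℕ, ∀ lam : ℝ, lam < 0 →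
      E (fun ω => Real.exp (lam * (ξ i ω - munder))) ≤ Real.exp (σ ^ 2 * lam ^ 2 / 2)) :
    V ({ω | liminf (fun n : ℕ =>
            (∑ i ∈ Finset.range (n + 1), ξ i ω) / ((n : ℝ) + 1)) atTop < munder} ∪
       {ω | limsup (fun n : ℕ =>
            (∑ i ∈ Finset.range (n + 1), ξ i ω) / ((n : ℝ) + 1)) atTop > mbar}) = 0 := by
  -- basic facts
  have Enonneg : ∀ X : Ω → ℝ, (∀ ω, 0 ≤ X ω) → 0 ≤ E X := by
    intro X hX
    have := hmono (fun _ => (0 : ℝ)) X hX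
    rwa [hconst 0] at this
  have Vnonneg : ∀ A : Set Ω, 0 ≤ V A := by
    intro A
    rw [hV]
    exact Enonneg _ fun ω => Set.indicator_nonneg (fun _ _ => zero_le_one) ω
  have Vmono : ∀ A B : Set Ω, A ⊆ B → V A ≤ V B := by
    intro A B hAB
    rw [hV, hV]
    exact hmono _ _ fun ω =>
      Set.indicator_le_indicator_of_subset hAB (fun _ => zero_le_one) ω
  have hσ2 : (0 : ℝ) < σ ^ 2 := by positivity
  -- generic Chernoff bound
  have chern : ∀ (lam m t : ℝ) (k : ℕ),
      (∀ i : ℕ, E (fun ω => Real.exp (lam * (ξ i ω - m))) ≤ Real.exp (σ ^ 2 * lam ^ 2 / 2)) →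
      V {ω | t ≤ lam * ∑ i ∈ Finset.range k, (ξ i ω - m)} ≤
        Real.exp ((k : ℝ) * (σ ^ 2 * lam ^ 2 / 2) - t) := by
    intro lam m t k hb
    have key : ∀ ω, ({ω | t ≤ lam * ∑ i ∈ Finset.range k, (ξ i ω - m)}.indicator
        (fun _ => (1 : ℝ))) ω ≤
        Real.exp (-t) * ∏ i ∈ Finset.range k, Real.exp (lam * (ξ i ω - m)) := by
      intro ω
      have hprod : Real.exp (-t) * ∏ i ∈ Finset.range k, Real.exp (lam * (ξ i ω - m)) =
          Real.exp (lam * ∑ i ∈ Finset.range k, (ξ i ω - m) - t) := by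
        rw [← Real.exp_sum, ← Real.exp_add, ← Finset.mul_sum]
        congr 1; ring
      by_cases hω : ω ∈ {ω | t ≤ lam * ∑ i ∈ Finset.range k, (ξ i ω - m)}
      · rw [Set.indicator_of_mem hω, hprod]
        have : (0 : ℝ) ≤ lam * ∑ i ∈ Finset.range k, (ξ i ω - m) - t := by
          have := hω; simp only [Set.mem_setOf_eq] at this; linarith
        calc (1 : ℝ) = Real.exp 0 := by simp
          _ ≤ _ := Real.exp_le_exp.2 this
      · rw [Set.indicator_of_notMem hω]
        positivity
    calc V {ω | t ≤ lam * ∑ i ∈ Finset.range k, (ξ i ω - m)}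
        = E _ := hV _
      _ ≤ E (fun ω => Real.exp (-t) *
            ∏ i ∈ Finset.range k, Real.exp (lam * (ξ i ω - m))) := hmono _ _ key
      _ = Real.exp (-t) * E (fun ω => ∏ i ∈ Finset.range k, Real.exp (lam * (ξ i ω - m))) :=
            hhomog _ (Real.exp_nonneg _) _
      _ ≤ Real.exp (-t) * ∏ i ∈ Finset.range k,
            E (fun ω => Real.exp (lam * (ξ i ω - m))) :=
            mul_le_mul_of_nonneg_left (hfact lam m k) (Real.exp_nonneg _)
      _ ≤ Real.exp (-t) * ∏ i ∈ Finset.range k, Real.exp (σ ^ 2 * lam ^ 2 / 2) := by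
            apply mul_le_mul_of_nonneg_left _ (Real.exp_nonneg _)
            apply Finset.prod_le_prod
            · intro i _
              exact Enonneg _ fun ω => Real.exp_nonneg _
            · intro i _
              exact hb i
      _ = Real.exp ((k : ℝ) * (σ ^ 2 * lam ^ 2 / 2) - t) := by
            rw [Finset.prod_const, Finset.card_range, ← Real.exp_nat_mul, ← Real.exp_add]
            ring_nf
  -- specialized upper Chernoff bound
  have chern_up : ∀ δ : ℝ, 0 < δ → ∀ n : ℕ,
      V {ω | mbar + δ ≤ (∑ i ∈ Finset.range (n + 1), ξ i ω) / ((n : ℝ) + 1)} ≤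
        Real.exp (-(δ ^ 2 / (2 * σ ^ 2))) ^ (n + 1) := by
    intro δ hδ n
    have hlam : (0 : ℝ) < δ / σ ^ 2 := by positivity
    have hn1 : (0 : ℝ) < (n : ℝ) + 1 := by positivity
    have hsub : {ω | mbar + δ ≤ (∑ i ∈ Finset.range (n + 1), ξ i ω) / ((n : ℝ) + 1)} ⊆
        {ω | ((n : ℝ) + 1) * δ * (δ / σ ^ 2) ≤
          (δ / σ ^ 2) * ∑ i ∈ Finset.range (n + 1), (ξ i ω - mbar)} := by
      intro ω hω
      simp only [Set.mem_setOf_eq] at hω ⊢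
      rw [le_div_iff₀ hn1] at hω
      have hsum : ∑ i ∈ Finset.range (n + 1), (ξ i ω - mbar) =
          (∑ i ∈ Finset.range (n + 1), ξ i ω) - ((n : ℝ) + 1) * mbar := by
        rw [Finset.sum_sub_distrib, Finset.sum_const, Finset.card_range]
        push_cast; ring
      have h2 : ((n : ℝ) + 1) * δ ≤ ∑ i ∈ Finset.range (n + 1), (ξ i ω - mbar) := by
        rw [hsum]; nlinarith
      calc ((n : ℝ) + 1) * δ * (δ / σ ^ 2) = (δ / σ ^ 2) * (((n : ℝ) + 1) * δ) := by ring
        _ ≤ (δ / σ ^ 2) * ∑ i ∈ Finset.range (n + 1), (ξ i ω - mbar) :=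
            mul_le_mul_of_nonneg_left h2 hlam.le
    have hbound := chern (δ / σ ^ 2) mbar (((n : ℝ) + 1) * δ * (δ / σ ^ 2)) (n + 1)
      (fun i => hup i _ hlam)
    have heq : ((n + 1 : ℕ) : ℝ) * (σ ^ 2 * (δ / σ ^ 2) ^ 2 / 2) -
        ((n : ℝ) + 1) * δ * (δ / σ ^ 2) = ((n + 1 : ℕ) : ℝ) * (-(δ ^ 2 / (2 * σ ^ 2))) := by
      push_cast
      field_simp
      ring
    calc V _ ≤ _ := Vmono _ _ hsub
      _ ≤ _ := hbound
      _ = Real.exp (-(δ ^ 2 / (2 * σ ^ 2))) ^ (n + 1) := by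
          rw [heq, Real.exp_nat_mul]
  -- specialized lower Chernoff bound
  have chern_low : ∀ δ : ℝ, 0 < δ → ∀ n : ℕ,
      V {ω | (∑ i ∈ Finset.range (n + 1), ξ i ω) / ((n : ℝ) + 1) ≤ munder - δ} ≤
        Real.exp (-(δ ^ 2 / (2 * σ ^ 2))) ^ (n + 1) := by
    intro δ hδ n
    have hp : (0 : ℝ) < δ / σ ^ 2 := by positivity
    have hlam : -(δ / σ ^ 2) < 0 := neg_lt_zero.mpr hp
    have hn1 : (0 : ℝ) < (n : ℝ) + 1 := by positivity
    have hsub : {ω | (∑ i ∈ Finset.range (n + 1), ξ i ω) / ((n : ℝ) + 1) ≤ munder - δ} ⊆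
        {ω | ((n : ℝ) + 1) * δ * (δ / σ ^ 2) ≤
          (-(δ / σ ^ 2)) * ∑ i ∈ Finset.range (n + 1), (ξ i ω - munder)} := by
      intro ω hω
      simp only [Set.mem_setOf_eq] at hω ⊢
      rw [div_le_iff₀ hn1] at hω
      have hsum : ∑ i ∈ Finset.range (n + 1), (ξ i ω - munder) =
          (∑ i ∈ Finset.range (n + 1), ξ i ω) - ((n : ℝ) + 1) * munder := by
        rw [Finset.sum_sub_distrib, Finset.sum_const, Finset.card_range]
        push_cast; ring
      have h2 : ((n : ℝ) + 1) * δ ≤ -(∑ i ∈ Finset.range (n + 1), (ξ i ω - munder)) := by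
        rw [hsum]; nlinarith
      calc ((n : ℝ) + 1) * δ * (δ / σ ^ 2) = (δ / σ ^ 2) * (((n : ℝ) + 1) * δ) := by ring
        _ ≤ (δ / σ ^ 2) * (-(∑ i ∈ Finset.range (n + 1), (ξ i ω - munder))) :=
            mul_le_mul_of_nonneg_left h2 hp.le
        _ = (-(δ / σ ^ 2)) * ∑ i ∈ Finset.range (n + 1), (ξ i ω - munder) := by ring
    have hbound := chern (-(δ / σ ^ 2)) munder (((n : ℝ) + 1) * δ * (δ / σ ^ 2)) (n + 1)
      (fun i => hlow i _ hlam)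
    have heq : ((n + 1 : ℕ) : ℝ) * (σ ^ 2 * (-(δ / σ ^ 2)) ^ 2 / 2) -
        ((n : ℝ) + 1) * δ * (δ / σ ^ 2) = ((n + 1 : ℕ) : ℝ) * (-(δ ^ 2 / (2 * σ ^ 2))) := by
      push_cast
      field_simp
      ring
    calc V _ ≤ _ := Vmono _ _ hsub
      _ ≤ _ := hbound
      _ = Real.exp (-(δ ^ 2 / (2 * σ ^ 2))) ^ (n + 1) := by
          rw [heq, Real.exp_nat_mul]
  -- Borel--Cantelli under the capacity
  have BC : ∀ (A : ℕ → Set Ω) (r : ℝ), 0 ≤ r → r < 1 → (∀ n, V (A n) ≤ r ^ (n + 1)) →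
      V {ω | ∃ᶠ n in atTop, ω ∈ A n} = 0 := by
    intro A r hr0 hr1 hA
    have hsub : ∀ N : ℕ, {ω | ∃ᶠ n in atTop, ω ∈ A n} ⊆ ⋃ n, A (N + n) := by
      intro N ω hω
      obtain ⟨n, hn, h⟩ := (frequently_atTop.mp hω) N
      exact Set.mem_iUnion.2 ⟨n - N, by rwa [Nat.add_sub_cancel' hn]⟩
    have hsummable : Summable (fun n : ℕ => r ^ n) := summable_geometric_of_lt_one hr0 hr1
    have hbound : ∀ N : ℕ, V {ω | ∃ᶠ n in atTop, ω ∈ A n} ≤ r ^ (N + 1) * (1 - r)⁻¹ := by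
      intro N
      have hs2 : Summable (fun n : ℕ => r ^ (N + n + 1)) := by
        have : (fun n : ℕ => r ^ (N + n + 1)) = fun n : ℕ => r ^ (N + 1) * r ^ n := by
          ext n; rw [← pow_add]; ring_nf
        rw [this]
        exact hsummable.mul_left _
      have h4 : ∑' n : ℕ, ENNReal.ofReal (r ^ (N + n + 1)) =
          ENNReal.ofReal (r ^ (N + 1) * (1 - r)⁻¹) := by
        rw [← ENNReal.ofReal_tsum_of_nonneg (fun n => pow_nonneg hr0 _) hs2]
        congr 1
        rw [← tsum_geometric_of_lt_one hr0 hr1, ← tsum_mul_left]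
        congr 1; ext n; rw [← pow_add]; ring_nf
      have hchain : ENNReal.ofReal (V {ω | ∃ᶠ n in atTop, ω ∈ A n}) ≤
          ENNReal.ofReal (r ^ (N + 1) * (1 - r)⁻¹) := by
        calc ENNReal.ofReal (V {ω | ∃ᶠ n in atTop, ω ∈ A n})
            ≤ ENNReal.ofReal (V (⋃ n, A (N + n))) :=
              ENNReal.ofReal_le_ofReal (Vmono _ _ (hsub N))
          _ ≤ ∑' n, ENNReal.ofReal (V (A (N + n))) := hVsigma _
          _ ≤ ∑' n : ℕ, ENNReal.ofReal (r ^ (N + n + 1)) := by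
              apply ENNReal.tsum_le_tsum
              intro n
              apply ENNReal.ofReal_le_ofReal
              exact hA (N + n)
          _ = _ := h4
      have hRHS : 0 ≤ r ^ (N + 1) * (1 - r)⁻¹ := by
        apply mul_nonneg (pow_nonneg hr0 _)
        rw [inv_nonneg]; linarith
      exact (ENNReal.ofReal_le_ofReal_iff hRHS).mp hchain
    have htend : Tendsto (fun N : ℕ => r ^ (N + 1) * (1 - r)⁻¹) atTop (nhds 0) := by
      have h1 := tendsto_pow_atTop_nhds_zero_of_lt_one hr0 hr1
      have h2 := (h1.comp (tendsto_add_atTop_nat 1)).mul_const (1 - r)⁻¹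
      simpa using h2
    have hle : V {ω | ∃ᶠ n in atTop, ω ∈ A n} ≤ 0 := ge_of_tendsto' htend hbound
    exact le_antisymm hle (Vnonneg _)
  -- the two families of null sets
  have hδpos : ∀ j : ℕ, (0 : ℝ) < 1 / ((j : ℝ) + 1) := by
    intro j; positivity
  have hrlt : ∀ j : ℕ, Real.exp (-((1 / ((j : ℝ) + 1)) ^ 2 / (2 * σ ^ 2))) < 1 := by
    intro j
    rw [Real.exp_lt_one_iff]
    have := hδpos j
    have : (0 : ℝ) < (1 / ((j : ℝ) + 1)) ^ 2 / (2 * σ ^ 2) := by positivity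
    linarith
  have hZup : ∀ j : ℕ, V {ω | ∃ᶠ n in atTop,
      mbar + 1 / ((j : ℝ) + 1) ≤ (∑ i ∈ Finset.range (n + 1), ξ i ω) / ((n : ℝ) + 1)} = 0 := by
    intro j
    exact BC (fun n => {ω | mbar + 1 / ((j : ℝ) + 1) ≤
        (∑ i ∈ Finset.range (n + 1), ξ i ω) / ((n : ℝ) + 1)})
      (Real.exp (-((1 / ((j : ℝ) + 1)) ^ 2 / (2 * σ ^ 2)))) (Real.exp_nonneg _) (hrlt j)
      (fun n => chern_up _ (hδpos j) n)
  have hZlo : ∀ j : ℕ, V {ω | ∃ᶠ n in atTop,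
      (∑ i ∈ Finset.range (n + 1), ξ i ω) / ((n : ℝ) + 1) ≤ munder - 1 / ((j : ℝ) + 1)} = 0 := by
    intro j
    exact BC (fun n => {ω | (∑ i ∈ Finset.range (n + 1), ξ i ω) / ((n : ℝ) + 1) ≤
        munder - 1 / ((j : ℝ) + 1)})
      (Real.exp (-((1 / ((j : ℝ) + 1)) ^ 2 / (2 * σ ^ 2)))) (Real.exp_nonneg _) (hrlt j)
      (fun n => chern_low _ (hδpos j) n)
  -- interleave the null sets
  set C : ℕ → Set Ω := fun k =>
    if k % 2 = 0 then
      {ω | ∃ᶠ n in atTop, mbar + 1 / (((k / 2 : ℕ) : ℝ) + 1) ≤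
        (∑ i ∈ Finset.range (n + 1), ξ i ω) / ((n : ℝ) + 1)}
    else
      {ω | ∃ᶠ n in atTop,
        (∑ i ∈ Finset.range (n + 1), ξ i ω) / ((n : ℝ) + 1) ≤
          munder - 1 / (((k / 2 : ℕ) : ℝ) + 1)}
    with hCdef
  have hC0 : ∀ k : ℕ, V (C k) = 0 := by
    intro k
    rw [hCdef]
    by_cases h : k % 2 = 0
    · simp only [h, if_true]
      exact hZup (k / 2)
    · simp only [h, if_false]
      exact hZlo (k / 2)
  -- the main inclusion
  have hinc : ({ω | liminf (fun n : ℕ =>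
          (∑ i ∈ Finset.range (n + 1), ξ i ω) / ((n : ℝ) + 1)) atTop < munder} ∪
      {ω | limsup (fun n : ℕ =>
          (∑ i ∈ Finset.range (n + 1), ξ i ω) / ((n : ℝ) + 1)) atTop > mbar}) ⊆
      ⋃ k, C k := by
    intro ω hω
    by_contra hnot
    have hall : ∀ k : ℕ, ω ∉ C k := by
      intro k hk
      exact hnot (Set.mem_iUnion.2 ⟨k, hk⟩)
    have hupj : ∀ j : ℕ, ∀ᶠ n in atTop,
        (∑ i ∈ Finset.range (n + 1), ξ i ω) / ((n : ℝ) + 1) < mbar + 1 / ((j : ℝ) + 1) := by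
      intro j
      have h := hall (2 * j)
      rw [hCdef] at h
      have h20 : (2 * j) % 2 = 0 := by omega
      have h2d : (2 * j) / 2 = j := by omega
      simp only [h20, if_true, h2d, Set.mem_setOf_eq, not_frequently] at h
      exact h.mono fun n hn => not_le.mp hn
    have hloj : ∀ j : ℕ, ∀ᶠ n in atTop,
        munder - 1 / ((j : ℝ) + 1) < (∑ i ∈ Finset.range (n + 1), ξ i ω) / ((n : ℝ) + 1) := by
      intro j
      have h := hall (2 * j + 1)
      rw [hCdef] at h
      have h21 : (2 * j + 1) % 2 ≠ 0 := by omega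
      have h2d : (2 * j + 1) / 2 = j := by omega
      simp only [h21, if_false, h2d, Set.mem_setOf_eq, not_frequently] at h
      exact h.mono fun n hn => not_le.mp hn
    have cobound_le : IsCoboundedUnder (· ≤ ·) atTop
        (fun n : ℕ => (∑ i ∈ Finset.range (n + 1), ξ i ω) / ((n : ℝ) + 1)) :=
      isCoboundedUnder_le_of_eventually_le atTop ((hloj 0).mono fun n hn => hn.le)
    have cobound_ge : IsCoboundedUnder (· ≥ ·) atTop
        (fun n : ℕ => (∑ i ∈ Finset.range (n + 1), ξ i ω) / ((n : ℝ) + 1)) :=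
      isCoboundedUnder_ge_of_eventually_le atTop ((hupj 0).mono fun n hn => hn.le)
    have hlimsup : limsup (fun n : ℕ =>
        (∑ i ∈ Finset.range (n + 1), ξ i ω) / ((n : ℝ) + 1)) atTop ≤ mbar := by
      apply le_of_forall_pos_le_add
      intro ε hε
      obtain ⟨j, hj⟩ := exists_nat_one_div_lt hε
      have h1 : limsup (fun n : ℕ =>
          (∑ i ∈ Finset.range (n + 1), ξ i ω) / ((n : ℝ) + 1)) atTop ≤
          mbar + 1 / ((j : ℝ) + 1) :=
        limsup_le_of_le cobound_le ((hupj j).mono fun n hn => hn.le)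
      linarith
    have hliminf : munder ≤ liminf (fun n : ℕ =>
        (∑ i ∈ Finset.range (n + 1), ξ i ω) / ((n : ℝ) + 1)) atTop := by
      apply le_of_forall_pos_le_add
      intro ε hε
      obtain ⟨j, hj⟩ := exists_nat_one_div_lt hε
      have h1 : munder - 1 / ((j : ℝ) + 1) ≤ liminf (fun n : ℕ =>
          (∑ i ∈ Finset.range (n + 1), ξ i ω) / ((n : ℝ) + 1)) atTop :=
        le_liminf_of_le cobound_ge ((hloj j).mono fun n hn => hn.le)
      linarith
    rcases hω with hω | hω
    · exact absurd hω (not_lt.mpr hliminf)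
    · exact absurd hω (not_lt.mpr hlimsup)
  -- conclude
  have h1 : ENNReal.ofReal (V ({ω | liminf (fun n : ℕ =>
          (∑ i ∈ Finset.range (n + 1), ξ i ω) / ((n : ℝ) + 1)) atTop < munder} ∪
      {ω | limsup (fun n : ℕ =>
          (∑ i ∈ Finset.range (n + 1), ξ i ω) / ((n : ℝ) + 1)) atTop > mbar})) ≤
      ∑' k, ENNReal.ofReal (V (C k)) :=
    le_trans (ENNReal.ofReal_le_ofReal (Vmono _ _ hinc)) (hVsigma C)
  have h2 : ∑' k, ENNReal.ofReal (V (C k)) = 0 := by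
    simp [hC0]
  rw [h2, le_zero_iff] at h1
  have h3 := ENNReal.ofReal_eq_zero.mp h1
  exact le_antisymm h3 (Vnonneg _)
end
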